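/- Let a < 0, b ∈ ℝ, λ > 0, μ > 0, and set α := λa, β := μb. Let u ∈ ℋ and define v := −α D₁,₀ u − β D₂,₀ u on the interior indices 𝓘. Then 2⟨u ; v⟩_{ℓ²(𝓘)} = −λ|a| · ∑_{k∈ℤ} (u_{0,k})². -/

import Mathlib

noncomputable section

/-- Forward difference in the first variable. -/
def D1p (u : ℤ → ℤ → ℝ) : ℤ → ℤ → ℝ := fun j k => u (j + 1) k - u j k
/-- Backward difference in the first variable. -/
def D1m (u : ℤ → ℤ → ℝ) : ℤ → ℤ → ℝ := fun j k => u j k - u (j - 1) k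
/-- Forward difference in the second variable. -/
def D2p (u : ℤ → ℤ → ℝ) : ℤ → ℤ → ℝ := fun j k => u j (k + 1) - u j k
/-- Backward difference in the second variable. -/
def D2m (u : ℤ → ℤ → ℝ) : ℤ → ℤ → ℝ := fun j k => u j k - u j (k - 1)
/-- Centered difference in the first variable. -/
def D10 (u : ℤ → ℤ → ℝ) : ℤ → ℤ → ℝ := fun j k => (D1p u j k + D1m u j k) / 2
/-- Centered difference in the second variable. -/
def D20 (u : ℤ → ℤ → ℝ) : ℤ → ℤ → ℝ := fun j k => (D2p u j k + D2m u j k) / 2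
/-- Discrete Laplacian in the first variable. -/
def L1 (u : ℤ → ℤ → ℝ) : ℤ → ℤ → ℝ := D1p (D1m u)
/-- Discrete Laplacian in the second variable. -/
def L2 (u : ℤ → ℤ → ℝ) : ℤ → ℤ → ℝ := D2p (D2m u)

/-- Squared ℓ²(ℤ²) norm. -/
def sqZ (u : ℤ → ℤ → ℝ) : ℝ := ∑' p : ℤ × ℤ, (u p.1 p.2) ^ 2
/-- ℓ²(ℤ²) scalar product. -/
def ipZ (u v : ℤ → ℤ → ℝ) : ℝ := ∑' p : ℤ × ℤ, u p.1 p.2 * v p.1 p.2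

/-- Squared ℓ²(𝓘) norm over the interior indices 𝓘 = ℕ × ℤ of the half-space grid. -/
def sqH (u : ℤ → ℤ → ℝ) : ℝ := ∑' p : ℕ × ℤ, (u (p.1 : ℤ) p.2) ^ 2
/-- ℓ²(𝓘) scalar product over the interior indices 𝓘 = ℕ × ℤ. -/
def ipH (u v : ℤ → ℤ → ℝ) : ℝ := ∑' p : ℕ × ℤ, u (p.1 : ℤ) p.2 * v (p.1 : ℤ) p.2
/-- Membership in ℋ : square-summable on the half-space grid and satisfying the
extrapolation (Neumann) boundary condition `u (-1) k = u 0 k`. -/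
def memH (u : ℤ → ℤ → ℝ) : Prop :=
  (∀ k : ℤ, u (-1) k = u 0 k) ∧ Summable (fun p : ℕ × ℤ => (u (p.1 : ℤ) p.2) ^ 2)

/-- Squared ℓ²(𝔦) norm over the interior indices 𝔦 = ℕ × ℕ of the quarter-space grid. -/
def sqQ (u : ℤ → ℤ → ℝ) : ℝ := ∑' p : ℕ × ℕ, (u (p.1 : ℤ) (p.2 : ℤ)) ^ 2
/-- ℓ²(𝔦) scalar product over the interior indices 𝔦 = ℕ × ℕ. -/
def ipQ (u v : ℤ → ℤ → ℝ) : ℝ :=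
  ∑' p : ℕ × ℕ, u (p.1 : ℤ) (p.2 : ℤ) * v (p.1 : ℤ) (p.2 : ℤ)
/-- Membership in 𝔥 : square-summable on the quarter-space grid, satisfying the
extrapolation boundary conditions on both sides and the corner condition. -/
def memQ (u : ℤ → ℤ → ℝ) : Prop :=
  (∀ k : ℤ, -1 ≤ k → u (-1) k = u 0 k) ∧ (∀ j : ℤ, 0 ≤ j → u j (-1) = u j 0) ∧
    Summable (fun p : ℕ × ℕ => (u (p.1 : ℤ) (p.2 : ℤ)) ^ 2)

/-- The skew-selfadjoint part `v` in the decomposition of the Lax-Wendroff scheme. -/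
def vop (α β : ℝ) (u : ℤ → ℤ → ℝ) : ℤ → ℤ → ℝ :=
  fun j k => -α * D10 u j k - β * D20 u j k
/-- The selfadjoint part `w` in the decomposition of the Lax-Wendroff scheme. -/
def wop (α β : ℝ) (u : ℤ → ℤ → ℝ) : ℤ → ℤ → ℝ :=
  fun j k => -(α ^ 2 / 2) * L1 u j k - (β ^ 2 / 2) * L2 u j k
    - α * β * D10 (D20 u) j k + ((α ^ 2 + β ^ 2) / 8) * L1 (L2 u) j k

lemma summable_mul_sq {ι : Type*} {f g : ι → ℝ} (hf : Summable (fun i => f i ^ 2))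
    (hg : Summable fun i => g i ^ 2) : Summable fun i => f i * g i := by
  apply Summable.of_abs
  refine Summable.of_nonneg_of_le (fun i => abs_nonneg _) (fun i => ?_)
    ((hf.add hg).div_const 2)
  rw [abs_mul]
  nlinarith [sq_nonneg (|f i| - |g i|), sq_abs (f i), sq_abs (g i),
    abs_nonneg (f i), abs_nonneg (g i)]

theorem halfspace_uv_boundary_aux (a b lam mu : ℝ) (ha : a < 0) (hlam : 0 < lam) (hmu : 0 < mu)
    (u : ℤ → ℤ → ℝ) (hu : memH u) :
    2 * ipH u (vop (lam * a) (mu * b) u) = -(lam * |a|) * ∑' k : ℤ, (u 0 k) ^ 2 := by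
  obtain ⟨hb, hs⟩ := hu
  set α := lam * a with hα
  set β := mu * b with hβ
  -- summability of shifted squares
  have hs1 : Summable fun p : ℕ × ℤ => u ((p.1 : ℤ) + 1) p.2 ^ 2 := by
    have := hs.comp_injective (i := fun p : ℕ × ℤ => (p.1 + 1, p.2))
      (fun p q h => by
        simp only [Prod.mk.injEq] at h; exact Prod.ext (by omega) h.2)
    simpa [Function.comp_def] using this
  have hsB : Summable fun k : ℤ => u 0 k ^ 2 := by
    have := hs.comp_injective (i := fun k : ℤ => ((0 : ℕ), k))
      (fun p q h => by simpa using h)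
    simpa [Function.comp_def] using this
  have hs2 : Summable fun p : ℕ × ℤ => u p.1 (p.2 + 1) ^ 2 := by
    have := hs.comp_injective (i := fun p : ℕ × ℤ => (p.1, p.2 + 1))
      (fun p q h => by
        simp only [Prod.mk.injEq] at h; exact Prod.ext h.1 (by omega))
    simpa [Function.comp_def] using this
  have hs2m : Summable fun p : ℕ × ℤ => u p.1 (p.2 - 1) ^ 2 := by
    have := hs.comp_injective (i := fun p : ℕ × ℤ => (p.1, p.2 - 1))
      (fun p q h => by
        simp only [Prod.mk.injEq] at h; exact Prod.ext h.1 (by omega))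
    simpa [Function.comp_def] using this
  have hslice : ∀ m : ℕ, Summable fun k : ℤ => u (m : ℤ) k ^ 2 := by
    intro m
    have := hs.comp_injective (i := fun k : ℤ => (m, k))
      (fun p q h => by simpa using h)
    simpa [Function.comp_def] using this
  have hsm : Summable fun p : ℕ × ℤ => u ((p.1 : ℤ) - 1) p.2 ^ 2 := by
    rw [summable_prod_of_nonneg (fun p => sq_nonneg _)]
    constructor
    · rintro (_ | m)
      · have : (fun k : ℤ => u (((0 : ℕ) : ℤ) - 1) k ^ 2) = fun k => u 0 k ^ 2 := by
          funext k; norm_num [hb k]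
        rw [this]; exact hsB
      · have : (fun k : ℤ => u (((m + 1 : ℕ) : ℤ) - 1) k ^ 2)
            = fun k => u (m : ℤ) k ^ 2 := by
          funext k; push_cast; ring_nf
        rw [this]; exact hslice m
    · have hT : Summable fun j : ℕ => ∑' k : ℤ, u (j : ℤ) k ^ 2 :=
        ((summable_prod_of_nonneg (fun p => sq_nonneg _)).mp hs).2
      apply (summable_nat_add_iff 1).mp
      have : (fun n : ℕ => ∑' k : ℤ, u (((n + 1 : ℕ) : ℤ) - 1) k ^ 2)
          = fun n : ℕ => ∑' k : ℤ, u (n : ℤ) k ^ 2 := by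
        funext n; congr 1; funext k; congr 2; push_cast; ring
      rw [this]; exact hT
  -- summability of products
  have hP1p : Summable fun p : ℕ × ℤ => u p.1 p.2 * u ((p.1 : ℤ) + 1) p.2 :=
    summable_mul_sq hs hs1
  have hP1m : Summable fun p : ℕ × ℤ => u p.1 p.2 * u ((p.1 : ℤ) - 1) p.2 :=
    summable_mul_sq hs hsm
  have hP1p' : Summable fun p : ℕ × ℤ => u ((p.1 : ℤ) + 1) p.2 * u p.1 p.2 :=
    summable_mul_sq hs1 hs
  have hP2p : Summable fun p : ℕ × ℤ => u p.1 p.2 * u p.1 (p.2 + 1) :=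
    summable_mul_sq hs hs2
  have hP2m : Summable fun p : ℕ × ℤ => u p.1 p.2 * u p.1 (p.2 - 1) :=
    summable_mul_sq hs hs2m
  set S1p := ∑' p : ℕ × ℤ, u p.1 p.2 * u ((p.1 : ℤ) + 1) p.2 with hS1p
  set S1m := ∑' p : ℕ × ℤ, u p.1 p.2 * u ((p.1 : ℤ) - 1) p.2 with hS1m
  set S2p := ∑' p : ℕ × ℤ, u p.1 p.2 * u p.1 (p.2 + 1) with hS2p
  set S2m := ∑' p : ℕ × ℤ, u p.1 p.2 * u p.1 (p.2 - 1) with hS2m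
  set B := ∑' k : ℤ, u 0 k ^ 2 with hB
  -- splitting the inner product
  have hsplit : ipH u (vop α β u)
      = (-α / 2) * S1p + ((α / 2) * S1m + ((-β / 2) * S2p + (β / 2) * S2m)) := by
    rw [ipH]
    have : (fun p : ℕ × ℤ => u p.1 p.2 * vop α β u p.1 p.2)
        = fun p : ℕ × ℤ => (-α / 2) * (u p.1 p.2 * u ((p.1 : ℤ) + 1) p.2)
          + ((α / 2) * (u p.1 p.2 * u ((p.1 : ℤ) - 1) p.2)
          + ((-β / 2) * (u p.1 p.2 * u p.1 (p.2 + 1))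
            + (β / 2) * (u p.1 p.2 * u p.1 (p.2 - 1)))) := by
      funext p
      simp only [vop, D10, D20, D1p, D1m, D2p, D2m]
      ring
    rw [this,
      Summable.tsum_add (hP1p.mul_left _)
        ((hP1m.mul_left _).add ((hP2p.mul_left _).add (hP2m.mul_left _))),
      Summable.tsum_add (hP1m.mul_left _) ((hP2p.mul_left _).add (hP2m.mul_left _)),
      Summable.tsum_add (hP2p.mul_left _) (hP2m.mul_left _),
      tsum_mul_left, tsum_mul_left, tsum_mul_left, tsum_mul_left]
  -- the second-variable sums cancel
  have h2 : S2m = S2p := by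
    have := ((Equiv.refl ℕ).prodCongr (Equiv.addRight (1 : ℤ))).tsum_eq
      (fun p : ℕ × ℤ => u p.1 p.2 * u p.1 (p.2 - 1))
    rw [hS2m, ← this]
    rw [hS2p]
    congr 1
    funext p
    simp [Equiv.prodCongr, Equiv.addRight, mul_comm]
  -- the first-variable sums produce the boundary term
  have h1 : S1m = B + S1p := by
    have hg : Summable fun j : ℕ => ∑' k : ℤ, u (j : ℤ) k * u ((j : ℤ) - 1) k := hP1m.prod
    rw [hS1m, Summable.tsum_prod hP1m, Summable.tsum_eq_zero_add hg]
    have hzero : (∑' k : ℤ, u ((0 : ℕ) : ℤ) k * u (((0 : ℕ) : ℤ) - 1) k) = B := by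
      rw [hB]; congr 1; funext k
      norm_num [hb k]
      ring
    have hshift : (∑' j : ℕ, ∑' k : ℤ, u ((j + 1 : ℕ) : ℤ) k * u (((j + 1 : ℕ) : ℤ) - 1) k)
        = S1p := by
      have heq : (fun j : ℕ => ∑' k : ℤ, u ((j + 1 : ℕ) : ℤ) k * u (((j + 1 : ℕ) : ℤ) - 1) k)
          = fun j : ℕ => ∑' k : ℤ, u ((j : ℤ) + 1) k * u (j : ℤ) k := by
        funext j; congr 1; funext k; push_cast; ring_nf
      rw [heq, ← Summable.tsum_prod hP1p', hS1p]
      congr 1; funext p; ring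
    rw [hzero, hshift]
  have habs : |a| = -a := abs_of_neg ha
  rw [hsplit, h1, h2, habs]
  ring

/-- Lemma 4 (i): boundary term produced by the skew-selfadjoint part in the half-space. -/
theorem halfspace_uv_boundary (a b lam mu : ℝ) (ha : a < 0) (hlam : 0 < lam) (hmu : 0 < mu)
    (u : ℤ → ℤ → ℝ) (hu : memH u) :
    2 * ipH u (vop (lam * a) (mu * b) u) = -(lam * |a|) * ∑' k : ℤ, (u 0 k) ^ 2 :=
  halfspace_uv_boundary_aux a b lam mu ha hlam hmu u hu
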